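/- Let (K,v) be a henselian valued field of residue characteristic p > 0 containing all p-th roots of unity, and let b, c ∈ K with v(b) ≥ (1/(p-1))·v(p) and v(c^p) > v(p). Then 1 + b - pc ∈ (1 + b + c^p)·(K^×)^p. -/

import Mathlib

open Polynomial

section Aux

variable {K : Type*} [Field K] {Γ : Type*} [LinearOrderedCommGroupWithZero Γ]

/-- valuation of a natural number is at most 1 -/
lemma val_natCast_le_one (w : Valuation K Γ) (n : ℕ) : w (n : K) ≤ 1 := by
  induction n with
  | zero => simp
  | succ n ih => push_cast; exact le_trans (w.map_add _ _) (by simp [ih])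

lemma mem_maxIdeal_iff (w : Valuation K Γ) (x : w.valuationSubring) :
    x ∈ IsLocalRing.maximalIdeal w.valuationSubring ↔ w x < 1 := by
  rw [ValuationSubring.valuation_lt_one_iff]
  exact ((Valuation.isEquiv_valuation_valuationSubring w).lt_one_iff_lt_one).symm

lemma isUnit_iff_val_eq_one (w : Valuation K Γ) (x : w.valuationSubring) :
    IsUnit x ↔ w x = 1 := by
  rw [ValuationSubring.valuation_eq_one_iff]
  exact ((Valuation.isEquiv_valuation_valuationSubring w).eq_one_iff_eq_one).symm

/-- valuation of a root of unity is 1 -/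
lemma val_rootOfUnity (w : Valuation K Γ) {ζ : K} {p : ℕ} (hp : 0 < p) (h : ζ ^ p = 1) :
    w ζ = 1 := by
  have h1 : (w ζ) ^ p = 1 := by rw [← map_pow, h, map_one]
  rcases lt_trichotomy (w ζ) 1 with h2 | h2 | h2
  · exact absurd h1 (by simpa using (pow_lt_one₀ zero_le' h2 hp.ne').ne)
  · exact h2
  · exact absurd h1 (by simpa using (one_lt_pow₀ h2 hp.ne').ne')

lemma val_one_sub_root_le (w : Valuation K Γ) {ζ μ : K} {p : ℕ} [NeZero p]
    (hζ : IsPrimitiveRoot ζ p) (hμ : μ ^ p = 1) : w (1 - μ) ≤ w (1 - ζ) := by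
  have hppos : 0 < p := Nat.pos_of_ne_zero (NeZero.ne p)
  obtain ⟨i, _, rfl⟩ := hζ.eq_pow_of_pow_eq_one hμ
  have key : ζ ^ i - 1 = (∑ j ∈ Finset.range i, ζ ^ j) * (ζ - 1) := (geom_sum_mul ζ i).symm
  calc w (1 - ζ ^ i) = w (ζ ^ i - 1) := by rw [← Valuation.map_neg]; ring_nf
    _ = w (∑ j ∈ Finset.range i, ζ ^ j) * w (ζ - 1) := by rw [key, map_mul]
    _ ≤ 1 * w (ζ - 1) := by
        refine mul_le_mul_left (Valuation.map_sum_le w fun j _ => ?_) _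
        rw [map_pow, val_rootOfUnity w hppos hζ.pow_eq_one]
        simp
    _ = w (1 - ζ) := by rw [one_mul, ← Valuation.map_neg]; ring_nf

/-- for a primitive p-th root of unity, w(p) = w(ζ-1)^(p-1) -/
lemma val_p_eq (w : Valuation K Γ) {ζ : K} {p : ℕ} (hp : p.Prime) (hne : (p : K) ≠ 0)
    (hζ : IsPrimitiveRoot ζ p) : w (p : K) = w (ζ - 1) ^ (p - 1) := by
  have : Fact p.Prime := ⟨hp⟩
  have : NeZero p := ⟨hp.ne_zero⟩
  have hprod : (p : K) = ∏ μ ∈ primitiveRoots p K, (1 - μ) := by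
    have h1 := Polynomial.eval_one_cyclotomic_prime (R := K) (p := p)
    rw [cyclotomic_eq_prod_X_sub_primitiveRoots hζ] at h1
    rw [← h1]
    simp [Polynomial.eval_prod]
  have heq : ∀ μ ∈ primitiveRoots p K, w (1 - μ) = w (1 - ζ) := by
    intro μ hμ
    rw [mem_primitiveRoots hp.pos] at hμ
    exact le_antisymm (val_one_sub_root_le w hζ hμ.pow_eq_one)
      (val_one_sub_root_le w hμ hζ.pow_eq_one)
  have hcard : (primitiveRoots p K).card = p - 1 := by
    rw [hζ.card_primitiveRoots, Nat.totient_prime hp]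
  calc w (p : K) = ∏ μ ∈ primitiveRoots p K, w (1 - μ) := by rw [hprod, map_prod]
    _ = w (1 - ζ) ^ (p - 1) := by rw [Finset.prod_congr rfl heq, Finset.prod_const, hcard]
    _ = w (ζ - 1) ^ (p - 1) := by rw [← Valuation.map_neg]; ring_nf

lemma exists_primitiveRoot (p : ℕ) (hp : p.Prime) (hne : (p : K) ≠ 0)
    (hroots : (X ^ p - 1 : K[X]).Splits) : ∃ ζ : K, IsPrimitiveRoot ζ p := by
  have : NeZero (p : K) := ⟨hne⟩
  have hXp : (X ^ p - 1 : K[X]) ≠ 0 := by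
    intro h
    have := congrArg (Polynomial.eval 0) h
    simp [zero_pow hp.ne_zero] at this
  have h1 : (cyclotomic p K) ∣ X ^ p - 1 := cyclotomic.dvd_X_pow_sub_one p K
  have hsp : (cyclotomic p K).Splits :=
    Polynomial.Splits.of_dvd hroots hXp h1
  have hdeg : (cyclotomic p K).degree ≠ 0 := by
    rw [degree_cyclotomic]
    simp [Nat.totient_prime hp, Nat.sub_ne_zero_of_lt hp.one_lt]
  obtain ⟨ζ, hζ⟩ := hsp.exists_eval_eq_zero hdeg
  have hζ' : Polynomial.IsRoot (cyclotomic p K) ζ := by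
    simpa [Polynomial.eval₂_eq_eval_map, Polynomial.IsRoot] using hζ
  exact ⟨ζ, (Polynomial.isRoot_cyclotomic_iff).1 hζ'⟩

lemma mul_lt_mul_of_lt_of_le₀ {a b c d : Γ} (hab : a ≤ b) (hb : b ≠ 0) (hcd : c < d) :
    a * c < b * d :=
  lt_of_le_of_lt (mul_le_mul_left hab c) (mul_lt_mul_of_pos_left hcd (zero_lt_iff.2 hb))

end Aux

/-- Let (K,v) be a henselian valued field of residue characteristic p > 0
containing all p-th roots of unity, and let b, c ∈ K with v(b) ≥ (1/(p-1))·v(p)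
(multiplicatively: w b ^ (p-1) ≤ w p) and v(c^p) > v(p) (multiplicatively:
w (c^p) < w p). Then 1 + b - pc ∈ (1 + b + c^p)·(K^×)^p. -/
theorem stmt1 {K : Type*} [Field K] {Γ : Type*} [LinearOrderedCommGroupWithZero Γ]
    (w : Valuation K Γ)
    (hhens : HenselianLocalRing w.valuationSubring)
    (p : ℕ) (hp : p.Prime)
    (hresp : w (p : K) < 1)  -- the residue characteristic is p
    (hroots : (Polynomial.X ^ p - 1 : Polynomial K).Splits)
    (b c : K) (hb : w b ^ (p - 1) ≤ w (p : K)) (hc : w (c ^ p) < w (p : K)) :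
    ∃ u : Kˣ, 1 + b - p * c = (1 + b + c ^ p) * (u : K) ^ p := by
  -- the case (p : K) = 0 is impossible
  by_cases hpK : (p : K) = 0
  · rw [hpK, map_zero] at hc
    exact absurd hc (by simp)
  -- basic facts
  have hp1 : 1 ≤ p := hp.one_lt.le
  have hppred : p - 1 ≠ 0 := Nat.sub_ne_zero_of_lt hp.one_lt
  have hW0 : w (p : K) ≠ 0 := by simpa using hpK
  -- get a primitive root of unity
  obtain ⟨ζ, hζ⟩ := exists_primitiveRoot p hp hpK hroots
  have hLW : w (p : K) = w (ζ - 1) ^ (p - 1) := val_p_eq w hp hpK hζ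
  set W := w (p : K) with hWdef
  set lam : K := ζ - 1 with hlamdef
  set L := w lam with hLdef
  have hL0 : L ≠ 0 := by
    intro h
    rw [h, zero_pow hppred] at hLW
    exact hW0 hLW
  have hlam0 : lam ≠ 0 := fun h => hL0 (by rw [hLdef, h, map_zero])
  have hL1 : L < 1 := by
    by_contra h
    push_neg at h
    exact absurd (hLW ▸ one_le_pow₀ h) (not_le.2 hresp)
  have hb1 : w b < 1 := by
    by_contra h
    push_neg at h
    exact absurd (le_trans (one_le_pow₀ h) hb) (not_le.2 hresp)
  have hcp : w c ^ p < W := by rwa [map_pow] at hc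
  have hc1 : w c < 1 := by
    by_contra h
    push_neg at h
    exact absurd (le_trans (one_le_pow₀ h) hcp.le) (not_le.2 hresp)
  have h1c : w (1 - c) = 1 := by
    rw [sub_eq_add_neg, add_comm, Valuation.map_add_eq_of_lt_right, map_one]
    rw [Valuation.map_neg, map_one]
    exact hc1
  have hA : w (1 + b + c ^ p) = 1 := by
    have h1b : w (1 + b) = 1 := by
      rw [Valuation.map_add_eq_of_lt_left, map_one]
      rw [map_one]; exact hb1
    rw [Valuation.map_add_eq_of_lt_left, h1b]
    rw [h1b, map_pow]
    exact lt_of_lt_of_le hcp hresp.le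
  have hAne : (1 + b + c ^ p) ≠ 0 := by
    intro h
    rw [h, map_zero] at hA
    exact zero_ne_one hA
  -- the binomial expansion
  have hbin : (1 - c) ^ p = 1 - p * c + (∑ i ∈ Finset.Ico 2 p, (-c) ^ i * (p.choose i : K))
      + (-1) ^ p * c ^ p := by
    have h1 : (1 - c : K) ^ p
        = ∑ k ∈ Finset.range (p + 1), (-c) ^ k * 1 ^ (p - k) * (p.choose k : K) := by
      rw [← add_pow]; ring_nf
    rw [h1, Finset.sum_range_succ, Finset.range_eq_Ico,
      Finset.sum_eq_sum_Ico_succ_bot hp.pos, Finset.sum_eq_sum_Ico_succ_bot hp.one_lt]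
    simp only [pow_zero, one_pow, one_mul, mul_one, pow_one, Nat.choose_zero_right,
      Nat.choose_one_right, Nat.choose_self, Nat.cast_one]
    rw [neg_pow c p]
    ring
  -- the key estimate
  have hS : w (∑ i ∈ Finset.Ico 2 p, (-c) ^ i * (p.choose i : K)) ≤ W * w c ^ 2 := by
    refine Valuation.map_sum_le w fun i hi => ?_
    obtain ⟨hi2, hip⟩ := Finset.mem_Ico.1 hi
    obtain ⟨m, hm⟩ := hp.dvd_choose_self (by omega) hip
    rw [hm, map_mul, map_pow, Valuation.map_neg]
    push_cast
    rw [map_mul]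
    calc w c ^ i * (W * w (m : K)) ≤ w c ^ 2 * (W * 1) := by
          refine mul_le_mul' (pow_le_pow_right_of_le_one' hc1.le hi2) ?_
          exact mul_le_mul_right (val_natCast_le_one w m) W
      _ = W * w c ^ 2 := by rw [mul_one, mul_comm]
  have hWp : W ^ p = (L ^ p) ^ (p - 1) := by
    rw [← pow_mul, mul_comm (p : ℕ) (p - 1), pow_mul, ← hLW]
  have key : ∀ x : Γ, x ^ (p - 1) < W ^ p → x < L ^ p := by
    intro x hx
    refine lt_of_pow_lt_pow_left₀ (p - 1) zero_le' ?_
    rwa [← hWp]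
  have hWeq : W ^ (p - 1) * W = W ^ p := by
    rw [← pow_succ, Nat.sub_add_cancel hp1]
  have hWpredne : W ^ (p - 1) ≠ 0 := pow_ne_zero _ hW0
  have hcc : ∀ m : ℕ, p ≤ m → w c ^ m < W := fun m hm =>
    lt_of_le_of_lt (pow_le_pow_right_of_le_one' hc1.le hm) hcp
  have hE : w ((-1 : K) ^ p + 1) ≤ W := by
    rcases hp.eq_two_or_odd' with h2 | hodd
    · subst h2
      norm_num
      exact le_of_eq (by norm_num [hWdef])
    · rw [hodd.neg_one_pow, neg_add_cancel, map_zero]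
      exact zero_le'
  have hDlt : w ((1 + b + c ^ p) * (1 - c) ^ p - (1 + b - p * c)) < L ^ p := by
    have hDeq : (1 + b + c ^ p) * (1 - c) ^ p - (1 + b - p * c)
        = -(p * c * b) + (1 + b + c ^ p) * (∑ i ∈ Finset.Ico 2 p, (-c) ^ i * (p.choose i : K))
          + ((-1 : K) ^ p + 1) * c ^ p + (-1 : K) ^ p * (b * c ^ p)
          + -(p * c ^ (p + 1)) + (-1 : K) ^ p * c ^ (2 * p) := by
      rw [hbin]; ring
    rw [hDeq]
    have t1 : w (-(p * c * b)) < L ^ p := by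
      rw [Valuation.map_neg, map_mul, map_mul]
      refine key _ ?_
      rw [mul_pow, mul_pow, ← hWdef]
      calc W ^ (p - 1) * w c ^ (p - 1) * w b ^ (p - 1)
          ≤ W ^ (p - 1) * W * w c ^ (p - 1) := by
            rw [mul_right_comm]
            exact mul_le_mul_left (mul_le_mul_right hb _) _
        _ < W ^ (p - 1) * W * 1 := by
            refine mul_lt_mul_of_lt_of_le₀ le_rfl (by rw [hWeq]; exact pow_ne_zero _ hW0) ?_
            exact pow_lt_one₀ zero_le' hc1 hppred
        _ = W ^ p := by rw [mul_one, hWeq]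
    have t2 : w ((1 + b + c ^ p) * (∑ i ∈ Finset.Ico 2 p, (-c) ^ i * (p.choose i : K)))
        < L ^ p := by
      rw [map_mul, hA, one_mul]
      refine lt_of_le_of_lt hS (key _ ?_)
      rw [mul_pow, ← pow_mul]
      calc W ^ (p - 1) * w c ^ (2 * (p - 1)) < W ^ (p - 1) * W :=
            mul_lt_mul_of_lt_of_le₀ le_rfl hWpredne (hcc _ (by omega))
        _ = W ^ p := hWeq
    have t3 : w (((-1 : K) ^ p + 1) * c ^ p) < L ^ p := by
      rw [map_mul, map_pow]
      refine key _ ?_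
      rw [mul_pow, ← pow_mul]
      calc (w ((-1 : K) ^ p + 1)) ^ (p - 1) * w c ^ (p * (p - 1))
          ≤ W ^ (p - 1) * w c ^ (p * (p - 1)) :=
            mul_le_mul_left (pow_le_pow_left' hE _) _
        _ < W ^ (p - 1) * W := mul_lt_mul_of_lt_of_le₀ le_rfl hWpredne (hcc _ (Nat.le_mul_of_pos_right p (by omega)))
        _ = W ^ p := hWeq
    have t4 : w ((-1 : K) ^ p * (b * c ^ p)) < L ^ p := by
      rw [map_mul, map_mul, map_pow, map_pow, Valuation.map_neg, map_one, one_pow, one_mul]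
      refine key _ ?_
      rw [mul_pow]
      calc w b ^ (p - 1) * (w c ^ p) ^ (p - 1) < W * W ^ (p - 1) :=
            mul_lt_mul_of_lt_of_le₀ hb hW0 (pow_lt_pow_left₀ hcp zero_le' hppred)
        _ = W ^ p := by rw [mul_comm]; exact hWeq
    have t5 : w (-(p * c ^ (p + 1))) < L ^ p := by
      rw [Valuation.map_neg, map_mul, map_pow]
      refine key _ ?_
      rw [mul_pow, ← pow_mul, ← hWdef]
      calc W ^ (p - 1) * w c ^ ((p + 1) * (p - 1)) < W ^ (p - 1) * W :=
            mul_lt_mul_of_lt_of_le₀ le_rfl hWpredne (hcc _ (le_trans (Nat.le_mul_of_pos_right p (by omega)) (Nat.mul_le_mul_right (p-1) (by omega))))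
        _ = W ^ p := hWeq
    have t6 : w ((-1 : K) ^ p * c ^ (2 * p)) < L ^ p := by
      rw [map_mul, map_pow, map_pow, Valuation.map_neg, map_one, one_pow, one_mul]
      refine key _ ?_
      rw [← pow_mul]
      calc w c ^ (2 * p * (p - 1)) = (w c ^ p) ^ (2 * (p - 1)) := by rw [← pow_mul]; ring_nf
        _ ≤ (w c ^ p) ^ p :=
            pow_le_pow_right_of_le_one' (pow_le_one₀ zero_le' hc1.le) (by omega)
        _ < W ^ p := pow_lt_pow_left₀ hcp zero_le' hp.ne_zero
    exact Valuation.map_add_lt w (Valuation.map_add_lt w (Valuation.map_add_lt w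
      (Valuation.map_add_lt w (Valuation.map_add_lt w t1 t2) t3) t4) t5) t6
  -- set up the polynomial
  set a : K := (1 - c) / lam with hadef
  set e₀ : K := (1 + b - p * c) / ((1 + b + c ^ p) * lam ^ p) with he₀def
  set g : Polynomial K := (Polynomial.X + Polynomial.C a) ^ p - Polynomial.C e₀ with hgdef
  have hwa : w a = L⁻¹ := by
    rw [hadef, map_div₀, h1c, one_div, hLdef]
  have hmonic : g.Monic := by
    have h1 : ((Polynomial.X + Polynomial.C a) ^ p).Monic := (monic_X_add_C a).pow p
    have h2 : g = (Polynomial.X + Polynomial.C a) ^ p + -Polynomial.C e₀ := by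
      rw [hgdef]; ring
    rw [h2]
    refine h1.add_of_left ?_
    rw [Polynomial.degree_neg]
    refine lt_of_le_of_lt Polynomial.degree_C_le ?_
    rw [Polynomial.degree_pow, Polynomial.degree_X_add_C]
    simpa using hp.pos
  have hconst : w (a ^ p - e₀) < 1 := by
    have hval : a ^ p - e₀ = ((1 + b + c ^ p) * (1 - c) ^ p - (1 + b - p * c))
        * ((1 + b + c ^ p) * lam ^ p)⁻¹ := by
      rw [hadef, he₀def, div_pow]
      field_simp
    rw [hval, map_mul, map_inv₀, map_mul, hA, one_mul, map_pow, ← hLdef]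
    calc w ((1 + b + c ^ p) * (1 - c) ^ p - (1 + b - p * c)) * (L ^ p)⁻¹
        = (L ^ p)⁻¹ * w ((1 + b + c ^ p) * (1 - c) ^ p - (1 + b - p * c)) := mul_comm _ _
      _ < (L ^ p)⁻¹ * L ^ p :=
          mul_lt_mul_of_lt_of_le₀ le_rfl (inv_ne_zero (pow_ne_zero _ hL0)) hDlt
      _ = 1 := inv_mul_cancel₀ (pow_ne_zero _ hL0)
  -- coefficients of g are integral
  have hcoeff : ∀ n, w (g.coeff n) ≤ 1 := by
    intro n
    rcases Nat.eq_zero_or_pos n with rfl | hn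
    · have h0 : g.coeff 0 = a ^ p - e₀ := by
        simp [hgdef, Polynomial.coeff_X_add_C_pow]
      rw [h0]
      exact hconst.le
    · have h0 : g.coeff n = a ^ (p - n) * (p.choose n : K) := by
        simp [hgdef, Polynomial.coeff_X_add_C_pow, Polynomial.coeff_C, hn.ne']
      rw [h0]
      rcases lt_trichotomy n p with hnp | rfl | hnp
      · obtain ⟨m, hm⟩ := hp.dvd_choose_self hn.ne' hnp
        rw [map_mul, map_pow, hwa, hm]
        push_cast
        rw [map_mul]
        have harith : (L⁻¹) ^ (p - n) * (W * 1) = L ^ (n - 1) := by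
          rw [mul_one, inv_pow, hLW]
          rw [mul_comm, ← pow_sub₀ L hL0 (by omega)]
          congr 1
          omega
        calc (L⁻¹) ^ (p - n) * (w (p : K) * w (m : K))
            ≤ (L⁻¹) ^ (p - n) * (W * 1) := by
              refine mul_le_mul_right ?_ _
              exact mul_le_mul_right (val_natCast_le_one w m) _
          _ = L ^ (n - 1) := harith
          _ ≤ 1 := pow_le_one₀ zero_le' hL1.le
      · simp
      · simp [Nat.choose_eq_zero_of_lt hnp]
  -- lift g to the valuation subring
  have hlift : g ∈ Polynomial.lifts (algebraMap w.valuationSubring K) := by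
    rw [Polynomial.lifts_iff_coeff_lifts]
    intro n
    exact ⟨⟨g.coeff n, (Valuation.mem_valuationSubring_iff w _).2 (hcoeff n)⟩, rfl⟩
  obtain ⟨q, hq_map, hq_deg, hq_monic⟩ := Polynomial.lifts_and_degree_eq_and_monic hlift hmonic
  -- Hensel's lemma hypotheses at a₀ = 0
  have heval0 : algebraMap w.valuationSubring K (q.eval 0) = a ^ p - e₀ := by
    have := Polynomial.eval_zero_map (algebraMap w.valuationSubring K) q
    rw [hq_map] at this
    rw [← this]
    simp [hgdef]
  have h0mem : q.eval 0 ∈ IsLocalRing.maximalIdeal w.valuationSubring := by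
    rw [mem_maxIdeal_iff]
    show w (algebraMap w.valuationSubring K (q.eval 0)) < 1
    rw [heval0]
    exact hconst
  have hder : algebraMap w.valuationSubring K (q.derivative.eval 0) = (p : K) * a ^ (p - 1) := by
    have h1 := Polynomial.eval_zero_map (algebraMap w.valuationSubring K) q.derivative
    rw [← Polynomial.derivative_map, hq_map] at h1
    rw [← h1, hgdef]
    simp [Polynomial.derivative_X_add_C_pow]
  have hderunit : IsUnit (q.derivative.eval 0) := by
    rw [isUnit_iff_val_eq_one]
    show w (algebraMap w.valuationSubring K (q.derivative.eval 0)) = 1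
    rw [hder, map_mul, map_pow, hwa, ← hWdef, hLW, inv_pow]
    exact mul_inv_cancel₀ (pow_ne_zero _ hL0)
  obtain ⟨z, hz_root, -⟩ := hhens.is_henselian q hq_monic 0 h0mem hderunit
  -- translate back
  have hgz : g.eval (algebraMap w.valuationSubring K z) = 0 := by
    rw [← hq_map, Polynomial.eval_map, Polynomial.eval₂_at_apply, hz_root]
    exact map_zero _
  set z' : K := algebraMap w.valuationSubring K z with hz'def
  have hzp : (z' + a) ^ p = e₀ := by
    have := hgz
    rw [hgdef] at this
    simp only [Polynomial.eval_sub, Polynomial.eval_pow, Polynomial.eval_add,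
      Polynomial.eval_X, Polynomial.eval_C] at this
    exact sub_eq_zero.1 this
  set u : K := lam * z' + (1 - c) with hudef
  have hu_eq : u = lam * (z' + a) := by
    rw [hudef, hadef, mul_add, mul_div_cancel₀ _ hlam0]
  have hup : (1 + b + c ^ p) * u ^ p = 1 + b - p * c := by
    rw [hu_eq, mul_pow, hzp, he₀def]
    field_simp
  have hz'le : w z' ≤ 1 := z.2
  have hu_ne : u ≠ 0 := by
    have : w u = 1 := by
      rw [hudef, Valuation.map_add_eq_of_lt_right, h1c]
      rw [map_mul, h1c, ← hLdef]
      calc L * w z' ≤ L * 1 := mul_le_mul_right hz'le _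
        _ < 1 := by rwa [mul_one]
    intro h
    rw [h, map_zero] at this
    exact zero_ne_one this
  exact ⟨Units.mk0 u hu_ne, by rw [Units.val_mk0, ← hup]⟩
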